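/- For each fixed t > 0 the map y ↦ ξ(t,y) is locally absolutely continuous, and for almost every y ∈ ℝ its derivative is given by ∂_y ξ(t,y) = (1/4)(2 + t·ū_x(y))² if ū_x(y) > −2/t, and ∂_y ξ(t,y) = 0 if ū_x(y) ≤ −2/t. -/

import Mathlib

open MeasureTheory

/-- `φ(t,y) = (1/4) ∫_{{ū_x > -2/t}} sign(y-x) ū_x(x)² dx` for `t ≠ 0`, and the full
integral `φ(0,y) = (1/4) ∫_ℝ sign(y-x) ū_x(x)² dx` at `t = 0`. -/
noncomputable def phiHS (w : ℝ → ℝ) (t y : ℝ) : ℝ :=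
  if t = 0 then (1 / 4) * ∫ x : ℝ, Real.sign (y - x) * (w x) ^ 2
  else (1 / 4) * ∫ x in {x : ℝ | w x > -2 / t}, Real.sign (y - x) * (w x) ^ 2

/-- The characteristic `ξ(t,y) = y + t ū(y) + ∫₀ᵗ (t-s) φ(s,y) ds`. -/
noncomputable def xiHS (u w : ℝ → ℝ) (t y : ℝ) : ℝ :=
  y + t * u y + ∫ s in (0 : ℝ)..t, (t - s) * phiHS w s y

/- ### Auxiliary lemmas -/

lemma measurable_realSign : Measurable Real.sign := by
  have : Real.sign = fun r : ℝ => if r < 0 then (-1 : ℝ) else if 0 < r then 1 else 0 := rfl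
  rw [this]
  refine Measurable.ite measurableSet_Iio measurable_const ?_
  exact Measurable.ite measurableSet_Ioi measurable_const measurable_const

lemma abs_realSign_le (x : ℝ) : |Real.sign x| ≤ 1 := by
  unfold Real.sign; split_ifs <;> norm_num

lemma realSign_diff_eq {a b x : ℝ} (hab : a ≤ b) (hxa : x ≠ a) (hxb : x ≠ b) :
    Real.sign (b - x) - Real.sign (a - x) = if x ∈ Set.Ioo a b then 2 else 0 := by
  rcases lt_or_gt_of_ne hxa with h1 | h1
  · rcases lt_or_gt_of_ne hxb with h2 | h2
    · rw [Real.sign_of_pos (by linarith), Real.sign_of_pos (by linarith),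
        if_neg (by simp [Set.mem_Ioo]; intro h; linarith)]
      ring
    · linarith
  · rcases lt_or_gt_of_ne hxb with h2 | h2
    · rw [Real.sign_of_pos (by linarith), Real.sign_of_neg (by linarith),
        if_pos ⟨h1, h2⟩]
      ring
    · rw [Real.sign_of_neg (by linarith), Real.sign_of_neg (by linarith),
        if_neg (by simp [Set.mem_Ioo]; intro h; linarith)]
      ring

lemma aux_int {t r : ℝ} (hr : 0 ≤ r) :
    ∫ s in Set.Ioc (0 : ℝ) r, (t - s) = t * r - r ^ 2 / 2 := by
  rw [← intervalIntegral.integral_of_le hr,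
    intervalIntegral.integral_sub intervalIntegrable_const
      intervalIntegral.intervalIntegrable_id, integral_id, intervalIntegral.integral_const]
  simp; ring

lemma integrable_snd {μ : Measure ℝ} [IsFiniteMeasure μ] {f : ℝ → ℝ}
    (hf : Integrable f volume) :
    Integrable (fun p : ℝ × ℝ => f p.2) (μ.prod volume) := by
  rw [integrable_prod_iff (hf.aestronglyMeasurable.comp_snd)]
  refine ⟨ae_of_all _ fun s => hf, ?_⟩
  exact (integrable_const (∫ y : ℝ, ‖f y‖) :
    Integrable (fun _ : ℝ => ∫ y : ℝ, ‖f y‖) μ)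

lemma ae_fst_mem_Ioc {t : ℝ} :
    ∀ᵐ p : ℝ × ℝ ∂((volume.restrict (Set.Ioc (0 : ℝ) t)).prod volume),
      p.1 ∈ Set.Ioc (0 : ℝ) t := by
  have h := Measure.prod_restrict (μ := (volume : Measure ℝ)) (ν := (volume : Measure ℝ))
    (Set.Ioc (0 : ℝ) t) Set.univ
  rw [Measure.restrict_univ] at h
  rw [h]
  filter_upwards [ae_restrict_mem (measurableSet_Ioc.prod MeasurableSet.univ)] with p hp
  exact hp.1

lemma integrable_aux {w : ℝ → ℝ} (K2 : Integrable (fun x => w x ^ 2) volume)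
    {t : ℝ} (ht : 0 < t) {F : ℝ × ℝ → ℝ} (hFm : StronglyMeasurable F)
    (hb : ∀ p : ℝ × ℝ, p.1 ∈ Set.Ioc 0 t → ‖F p‖ ≤ t * w p.2 ^ 2) :
    Integrable F ((volume.restrict (Set.Ioc (0 : ℝ) t)).prod volume) := by
  haveI : IsFiniteMeasure (volume.restrict (Set.Ioc (0 : ℝ) t)) := by
    constructor
    rw [Measure.restrict_apply_univ, Real.volume_Ioc]
    exact ENNReal.ofReal_lt_top
  refine Integrable.mono' ((integrable_snd K2).const_mul t) hFm.aestronglyMeasurable ?_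
  filter_upwards [ae_fst_mem_Ioc] with p hp using hb p hp

lemma l2_integrableOn {f : ℝ → ℝ} (hf : MemLp f 2 (volume : Measure ℝ)) (s : Set ℝ)
    (hs : volume s < ⊤) : IntegrableOn f s volume := by
  haveI : IsFiniteMeasure (volume.restrict s) := ⟨by rwa [Measure.restrict_apply_univ]⟩
  exact (hf.restrict s).integrable (by norm_num)

/-- auxiliary product-integrand for a single endpoint `y`. -/
noncomputable def FFaux (w : ℝ → ℝ) (t y : ℝ) : ℝ × ℝ → ℝ := fun p =>
  Set.indicator {q : ℝ × ℝ | -2 < q.1 * w q.2}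
    (fun q => (t - q.1) * ((1 / 4) * (Real.sign (y - q.2) * w q.2 ^ 2))) p

/-- auxiliary product-integrand for the difference. -/
noncomputable def Gaux (w : ℝ → ℝ) (t a b : ℝ) : ℝ × ℝ → ℝ := fun p =>
  Set.indicator {q : ℝ × ℝ | -2 < q.1 * w q.2}
    (fun q => (t - q.1) * Set.indicator (Set.Ioo a b) (fun x => (1 / 2) * w x ^ 2) q.2) p

/-- The main computation: difference of characteristics for measurable `w`. -/
lemma xi_diff_eq {u w : ℝ → ℝ} (hw : Measurable w) (hL2 : MemLp w 2 (volume : Measure ℝ))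
    (hAC : ∀ a b : ℝ, a ≤ b → u b - u a = ∫ x in a..b, w x)
    {t : ℝ} (ht : 0 < t) {a b : ℝ} (hab : a ≤ b) :
    xiHS u w t b - xiHS u w t a =
      ∫ y in a..b, (if w y > -2 / t then (1 / 4) * (2 + t * w y) ^ 2 else 0) := by
  have K2 : Integrable (fun x => w x ^ 2) volume := hL2.integrable_sq
  set g : ℝ → ℝ := fun y => if w y > -2 / t then (1 / 4) * (2 + t * w y) ^ 2 else 0 with hg
  -- measurability and integrability of the product integrands
  have hFFm : ∀ y, StronglyMeasurable (FFaux w t y) := by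
    intro y
    apply Measurable.stronglyMeasurable
    apply Measurable.indicator
    · exact (measurable_const.sub measurable_fst).mul
        (measurable_const.mul
          ((measurable_realSign.comp (measurable_const.sub measurable_snd)).mul
            ((hw.comp measurable_snd).pow measurable_const)))
    · exact measurableSet_lt measurable_const (measurable_fst.mul (hw.comp measurable_snd))
  have hFFb : ∀ y, ∀ p : ℝ × ℝ, p.1 ∈ Set.Ioc 0 t → ‖FFaux w t y p‖ ≤ t * w p.2 ^ 2 := by
    intro y p hp
    have h1 : |Real.sign (y - p.2)| ≤ 1 := abs_realSign_le _
    have h2 : |t - p.1| ≤ t := by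
      rw [abs_of_nonneg (by linarith [hp.2])]; linarith [hp.1]
    calc ‖FFaux w t y p‖ ≤ ‖(t - p.1) * ((1 / 4) * (Real.sign (y - p.2) * w p.2 ^ 2))‖ :=
          norm_indicator_le_norm_self _ _
      _ = |t - p.1| * ((1 / 4) * (|Real.sign (y - p.2)| * w p.2 ^ 2)) := by
          rw [Real.norm_eq_abs, abs_mul, abs_mul, abs_mul,
            abs_of_nonneg (sq_nonneg (w p.2))]
          norm_num
      _ ≤ t * (1 * (1 * w p.2 ^ 2)) := by
          refine mul_le_mul h2 ?_ (by positivity) ht.le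
          refine mul_le_mul (by norm_num) ?_ (by positivity) zero_le_one
          exact mul_le_mul h1 le_rfl (sq_nonneg _) zero_le_one
      _ = t * w p.2 ^ 2 := by ring
  have hFFi : ∀ y, Integrable (FFaux w t y)
      ((volume.restrict (Set.Ioc (0 : ℝ) t)).prod volume) :=
    fun y => integrable_aux K2 ht (hFFm y) (hFFb y)
  have hGm : StronglyMeasurable (Gaux w t a b) := by
    apply Measurable.stronglyMeasurable
    apply Measurable.indicator
    · exact (measurable_const.sub measurable_fst).mul
        ((Measurable.indicator (measurable_const.mul (hw.pow measurable_const))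
          measurableSet_Ioo).comp measurable_snd)
    · exact measurableSet_lt measurable_const (measurable_fst.mul (hw.comp measurable_snd))
  have hGb : ∀ p : ℝ × ℝ, p.1 ∈ Set.Ioc 0 t → ‖Gaux w t a b p‖ ≤ t * w p.2 ^ 2 := by
    intro p hp
    have h2 : |t - p.1| ≤ t := by
      rw [abs_of_nonneg (by linarith [hp.2])]; linarith [hp.1]
    have h3 : ‖Set.indicator (Set.Ioo a b) (fun x => (1 / 2) * w x ^ 2) p.2‖ ≤
        (1 / 2) * w p.2 ^ 2 := by
      refine (norm_indicator_le_norm_self _ _).trans ?_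
      rw [Real.norm_eq_abs, abs_of_nonneg (by positivity)]
    calc ‖Gaux w t a b p‖
        ≤ ‖(t - p.1) * Set.indicator (Set.Ioo a b) (fun x => (1 / 2) * w x ^ 2) p.2‖ :=
          norm_indicator_le_norm_self _ _
      _ = |t - p.1| * ‖Set.indicator (Set.Ioo a b) (fun x => (1 / 2) * w x ^ 2) p.2‖ := by
          rw [norm_mul, Real.norm_eq_abs]
      _ ≤ t * ((1 / 2) * w p.2 ^ 2) := mul_le_mul h2 h3 (norm_nonneg _) ht.le
      _ ≤ t * w p.2 ^ 2 := by nlinarith [sq_nonneg (w p.2), ht.le]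
  have hGi : Integrable (Gaux w t a b)
      ((volume.restrict (Set.Ioc (0 : ℝ) t)).prod volume) :=
    integrable_aux K2 ht hGm hGb
  -- endpoint representation
  have R1 : ∀ y : ℝ, (∫ s in (0 : ℝ)..t, (t - s) * phiHS w s y)
      = ∫ p, FFaux w t y p ∂((volume.restrict (Set.Ioc (0 : ℝ) t)).prod volume) := by
    intro y
    rw [intervalIntegral.integral_of_le ht.le, MeasureTheory.integral_prod _ (hFFi y)]
    refine (setIntegral_congr_fun measurableSet_Ioc fun s hs => ?_)
    have hs0 : (0 : ℝ) < s := hs.1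
    have hEs : MeasurableSet {x : ℝ | w x > -2 / s} := measurableSet_lt measurable_const hw
    have hiff : ∀ x : ℝ, (-2 / s < w x) ↔ (-2 < s * w x) := by
      intro x; rw [div_lt_iff₀ hs0, mul_comm]
    have key : ∀ x : ℝ, FFaux w t y (s, x) =
        Set.indicator {x : ℝ | w x > -2 / s}
          (fun x => (t - s) * ((1 / 4) * (Real.sign (y - x) * w x ^ 2))) x := by
      intro x
      simp only [FFaux, Set.indicator_apply, Set.mem_setOf_eq, gt_iff_lt]
      by_cases hx : -2 < s * w x
      · rw [if_pos hx, if_pos ((hiff x).2 hx)]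
      · rw [if_neg hx, if_neg (fun hc => hx ((hiff x).1 hc))]
    calc (t - s) * phiHS w s y
        = (t - s) * ((1 / 4) * ∫ x in {x : ℝ | w x > -2 / s},
            Real.sign (y - x) * w x ^ 2) := by
          simp only [phiHS, if_neg hs0.ne']
      _ = ∫ x in {x : ℝ | w x > -2 / s},
            (t - s) * ((1 / 4) * (Real.sign (y - x) * w x ^ 2)) := by
          rw [integral_const_mul, integral_const_mul]
      _ = ∫ x, Set.indicator {x : ℝ | w x > -2 / s}
            (fun x => (t - s) * ((1 / 4) * (Real.sign (y - x) * w x ^ 2))) x := by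
          rw [integral_indicator hEs]
      _ = ∫ x, FFaux w t y (s, x) :=
          integral_congr_ae (ae_of_all _ fun x => (key x).symm)
  -- the difference of the two integrands coincides a.e. with `Gaux`
  have step3 : (fun p : ℝ × ℝ => FFaux w t b p - FFaux w t a p)
      =ᵐ[(volume.restrict (Set.Ioc (0 : ℝ) t)).prod volume] Gaux w t a b := by
    have hnull : ((volume.restrict (Set.Ioc (0 : ℝ) t)).prod volume)
        {p : ℝ × ℝ | p.2 = a ∨ p.2 = b} = 0 := by
      have hset : {p : ℝ × ℝ | p.2 = a ∨ p.2 = b} = Set.univ ×ˢ ({a, b} : Set ℝ) := by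
        ext p; simp [Set.mem_prod]
      rw [hset, Measure.prod_prod]
      have hv : volume ({a, b} : Set ℝ) = 0 := Set.Finite.measure_zero (Set.toFinite _) _
      rw [hv, mul_zero]
    have h2 : ∀ᵐ p ∂((volume.restrict (Set.Ioc (0 : ℝ) t)).prod volume),
        ¬(p.2 = a ∨ p.2 = b) := by
      rw [ae_iff]
      refine measure_mono_null (fun p hp => ?_) hnull
      simp only [Set.mem_setOf_eq] at hp ⊢
      tauto
    filter_upwards [h2] with p hp
    push_neg at hp
    obtain ⟨hpa, hpb⟩ := hp
    have hd := realSign_diff_eq hab hpa hpb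
    simp only [FFaux, Gaux, Set.indicator_apply, Set.mem_setOf_eq]
    by_cases hm : -2 < p.1 * w p.2
    · simp only [if_pos hm]
      by_cases hIoo : p.2 ∈ Set.Ioo a b
      · rw [if_pos hIoo] at hd
        rw [if_pos hIoo]
        linear_combination ((t - p.1) * (1 / 4) * w p.2 ^ 2) * hd
      · rw [if_neg hIoo] at hd
        rw [if_neg hIoo]
        linear_combination ((t - p.1) * (1 / 4) * w p.2 ^ 2) * hd
    · simp only [if_neg hm]
      ring
  -- inner integral in `s`
  have step5 : ∀ x : ℝ, (∫ s, Gaux w t a b (s, x) ∂(volume.restrict (Set.Ioc (0 : ℝ) t)))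
      = Set.indicator (Set.Ioo a b) (fun x => g x - 1 - t * w x) x := by
    intro x
    by_cases hx : x ∈ Set.Ioo a b
    · have key : ∀ s : ℝ, Gaux w t a b (s, x) =
          Set.indicator {s : ℝ | -2 < s * w x}
            (fun s => (t - s) * ((1 / 2) * w x ^ 2)) s := by
        intro s
        simp only [Gaux, Set.indicator_apply, Set.mem_setOf_eq, if_pos hx]
      have hSm : MeasurableSet {s : ℝ | -2 < s * w x} :=
        measurableSet_lt measurable_const (measurable_id.mul_const (w x))
      rw [Set.indicator_of_mem hx]
      rw [integral_congr_ae (ae_of_all _ key), setIntegral_indicator hSm,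
        integral_mul_const]
      rcases le_or_gt (-2) (t * w x) with hc1 | hc1
      · -- the constraint is inactive (up to the single point `t`)
        have hae : ((Set.Ioc 0 t ∩ {s : ℝ | -2 < s * w x} : Set ℝ)) =ᵐ[volume]
            (Set.Ioc (0 : ℝ) t : Set ℝ) := by
          have h0 : volume (Set.Ioc 0 t \ (Set.Ioc 0 t ∩ {s : ℝ | -2 < s * w x})) = 0 := by
            refine measure_mono_null ?_ (measure_singleton t)
            intro s hs
            simp only [Set.mem_diff, Set.mem_inter_iff, Set.mem_Ioc, Set.mem_setOf_eq] at hs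
            obtain ⟨⟨h1, h2⟩, h3⟩ := hs
            simp only [Set.mem_singleton_iff]
            by_contra hne
            have hlt : s < t := lt_of_le_of_ne h2 hne
            refine h3 ⟨⟨h1, h2⟩, ?_⟩
            rcases le_or_gt 0 (w x) with hcp | hcn
            · nlinarith
            · nlinarith [mul_lt_mul_of_neg_right hlt hcn]
          have h0' : volume ((Set.Ioc 0 t ∩ {s : ℝ | -2 < s * w x}) \ Set.Ioc (0 : ℝ) t)
              = 0 := by
            rw [Set.diff_eq_empty.mpr Set.inter_subset_left]
            exact measure_empty
          exact MeasureTheory.ae_eq_set.2 ⟨h0', h0⟩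
        rw [Measure.restrict_congr_set hae, aux_int ht.le]
        simp only [hg]
        by_cases hgt : w x > -2 / t
        · rw [if_pos hgt]; ring
        · rw [if_neg hgt]
          have h1 : w x * t ≤ -2 := (le_div_iff₀ ht).1 (not_lt.1 hgt)
          have h2 : t * w x = -2 := by
            have hcomm : w x * t = t * w x := mul_comm _ _
            linarith
          have h4 : (t * w x) ^ 2 = 4 := by rw [h2]; norm_num
          linear_combination (1 / 4) * h4 + h2
      · -- the constraint is active
        have hcneg : w x < 0 := by nlinarith
        have hne : w x ≠ 0 := ne_of_lt hcneg
        have hm0 : (0 : ℝ) < -2 / w x := div_pos_of_neg_of_neg (by norm_num) hcneg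
        have hmt : -2 / w x < t := by
          rw [div_lt_iff_of_neg hcneg]
          exact hc1
        have hSeq : Set.Ioc 0 t ∩ {s : ℝ | -2 < s * w x} = Set.Ioo 0 (-2 / w x) := by
          ext s
          simp only [Set.mem_inter_iff, Set.mem_Ioc, Set.mem_setOf_eq, Set.mem_Ioo]
          constructor
          · rintro ⟨⟨h1, h2⟩, h3⟩
            refine ⟨h1, ?_⟩
            rw [lt_div_iff_of_neg hcneg]
            exact h3
          · rintro ⟨h1, h2⟩
            have h2' := h2
            rw [lt_div_iff_of_neg hcneg] at h2'
            exact ⟨⟨h1, le_of_lt (lt_trans h2 hmt)⟩, h2'⟩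
        rw [hSeq, ← integral_Ioc_eq_integral_Ioo, aux_int hm0.le]
        simp only [hg]
        rw [if_neg (by intro hcon; rw [gt_iff_lt, div_lt_iff₀ ht] at hcon; nlinarith)]
        field_simp
        ring
    · have hzero : ∀ s : ℝ, Gaux w t a b (s, x) = 0 := by
        intro s
        simp only [Gaux, Set.indicator_apply, Set.mem_setOf_eq, if_neg hx]
        split <;> simp
      rw [Set.indicator_of_notMem hx]
      simp only [hzero, integral_zero]
  -- interval integrability facts
  have hIw : IntervalIntegrable w volume a b := by
    rw [intervalIntegrable_iff]
    exact l2_integrableOn hL2 _ measure_Ioc_lt_top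
  have hgm : Measurable g := by
    refine Measurable.ite (measurableSet_lt measurable_const hw) ?_ measurable_const
    exact measurable_const.mul ((measurable_const.add (measurable_const.mul hw)).pow
      measurable_const)
  have hIg : IntervalIntegrable g volume a b := by
    rw [intervalIntegrable_iff]
    refine Integrable.mono' ((integrableOn_const (C := (2 : ℝ)) measure_Ioc_lt_top.ne).add
      ((K2.const_mul (t ^ 2 / 2)).integrableOn))
      hgm.aestronglyMeasurable.restrict (ae_of_all _ fun x => ?_)
    simp only [hg, Pi.add_apply]
    by_cases hgt : w x > -2 / t
    · rw [if_pos hgt, Real.norm_eq_abs, abs_of_nonneg (by positivity)]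
      nlinarith [sq_nonneg (t * w x - 2)]
    · rw [if_neg hgt, norm_zero]
      positivity
  have hIh : IntervalIntegrable (fun x => g x - 1 - t * w x) volume a b :=
    (hIg.sub intervalIntegrable_const).sub (hIw.const_mul t)
  -- assemble
  have hmain : xiHS u w t b - xiHS u w t a
      = (b - a) + t * (u b - u a)
        + ((∫ p, FFaux w t b p ∂((volume.restrict (Set.Ioc (0 : ℝ) t)).prod volume))
          - (∫ p, FFaux w t a p ∂((volume.restrict (Set.Ioc (0 : ℝ) t)).prod volume))) := by
    simp only [xiHS]
    rw [R1 b, R1 a]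
    ring
  rw [hmain, hAC a b hab, ← integral_sub (hFFi b) (hFFi a),
    integral_congr_ae step3, integral_prod_symm _ hGi]
  have h6 : (∫ x : ℝ, ∫ s, Gaux w t a b (s, x) ∂(volume.restrict (Set.Ioc (0 : ℝ) t)))
      = ∫ x in a..b, (g x - 1 - t * w x) := by
    rw [integral_congr_ae (ae_of_all _ step5), integral_indicator measurableSet_Ioo,
      ← integral_Ioc_eq_integral_Ioo, ← intervalIntegral.integral_of_le hab]
  rw [h6]
  have h7 : ∫ y in a..b, g y = ∫ y in a..b, ((1 + t * w y) + (g y - 1 - t * w y)) := by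
    apply intervalIntegral.integral_congr
    intro y _
    ring
  rw [h7, intervalIntegral.integral_add (intervalIntegrable_const.add (hIw.const_mul t)) hIh,
    intervalIntegral.integral_add intervalIntegrable_const (hIw.const_mul t),
    intervalIntegral.integral_const, intervalIntegral.integral_const_mul]
  simp only [smul_eq_mul, mul_one]

/-- For each `t > 0` the map `y ↦ ξ(t,y)` is (locally) absolutely continuous, with
a.e. derivative `(1/4)(2 + t ū_x(y))²` where `ū_x(y) > -2/t` and `0` where
`ū_x(y) ≤ -2/t`. -/
theorem xi_spatial_derivative (ubar ubarx : ℝ → ℝ)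
    (hAC : ∀ a b : ℝ, a ≤ b → ubar b - ubar a = ∫ x in a..b, ubarx x)
    (hL2 : MemLp ubarx 2 (volume : Measure ℝ)) :
    ∀ t : ℝ, 0 < t →
      (∀ a b : ℝ, a ≤ b →
        xiHS ubar ubarx t b - xiHS ubar ubarx t a =
          ∫ y in a..b,
            (if ubarx y > -2 / t then (1 / 4) * (2 + t * ubarx y) ^ 2 else 0)) ∧
      (∀ᵐ y : ℝ, HasDerivAt (fun z => xiHS ubar ubarx t z)
        (if ubarx y > -2 / t then (1 / 4) * (2 + t * ubarx y) ^ 2 else 0) y) := by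
  intro t ht
  obtain ⟨w, hwm, hwe⟩ : ∃ w : ℝ → ℝ, Measurable w ∧ ubarx =ᵐ[volume] w :=
    ⟨hL2.1.mk ubarx, hL2.1.stronglyMeasurable_mk.measurable, hL2.1.ae_eq_mk⟩
  have hL2' : MemLp w 2 (volume : Measure ℝ) := hL2.ae_eq hwe
  have hphi : ∀ s y : ℝ, phiHS ubarx s y = phiHS w s y := by
    intro s y
    by_cases hs : s = 0
    · simp only [phiHS, if_pos hs]
      congr 1
      refine integral_congr_ae (hwe.mono fun x hx => ?_)
      simp only [hx]
    · simp only [phiHS, if_neg hs]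
      congr 1
      have hset : ({x : ℝ | ubarx x > -2 / s} : Set ℝ) =ᵐ[volume]
          ({x : ℝ | w x > -2 / s} : Set ℝ) := by
        filter_upwards [hwe] with x hx
        show (ubarx x > -2 / s) = (w x > -2 / s)
        rw [hx]
      rw [Measure.restrict_congr_set hset]
      refine integral_congr_ae (ae_restrict_of_ae ?_)
      filter_upwards [hwe] with x hx
      simp only [hx]
  have hxi : ∀ y : ℝ, xiHS ubar ubarx t y = xiHS ubar w t y := by
    intro y
    simp only [xiHS, hphi]
  have hAC' : ∀ a b : ℝ, a ≤ b → ubar b - ubar a = ∫ x in a..b, w x := by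
    intro a b hab
    rw [hAC a b hab]
    exact intervalIntegral.integral_congr_ae (hwe.mono fun x hx _ => hx)
  set gw : ℝ → ℝ := fun y => if w y > -2 / t then (1 / 4) * (2 + t * w y) ^ 2 else 0 with hgw
  have hdiff : ∀ a b : ℝ, a ≤ b → xiHS ubar w t b - xiHS ubar w t a = ∫ y in a..b, gw y :=
    fun a b hab => xi_diff_eq hwm hL2' hAC' ht hab
  constructor
  · intro a b hab
    rw [hxi b, hxi a, hdiff a b hab]
    refine intervalIntegral.integral_congr_ae (hwe.mono fun y hy _ => ?_)
    simp only [hgw, hy]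
  · have hgnonneg : ∀ y, 0 ≤ gw y := by
      intro y
      simp only [hgw]
      split
      · positivity
      · exact le_refl 0
    have hgm : Measurable gw := by
      refine Measurable.ite (measurableSet_lt measurable_const hwm) ?_ measurable_const
      exact measurable_const.mul ((measurable_const.add (measurable_const.mul hwm)).pow
        measurable_const)
    have K2 : Integrable (fun x => w x ^ 2) volume := hL2'.integrable_sq
    have hIg : ∀ a b : ℝ, IntervalIntegrable gw volume a b := by
      intro a b
      rw [intervalIntegrable_iff]
      refine Integrable.mono' ((integrableOn_const (C := (2 : ℝ))
        measure_Ioc_lt_top.ne).add ((K2.const_mul (t ^ 2 / 2)).integrableOn))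
        hgm.aestronglyMeasurable.restrict (ae_of_all _ fun x => ?_)
      simp only [hgw, Pi.add_apply]
      by_cases hgt : w x > -2 / t
      · rw [if_pos hgt, Real.norm_eq_abs, abs_of_nonneg (by positivity)]
        nlinarith [sq_nonneg (t * w x - 2)]
      · rw [if_neg hgt, norm_zero]
        positivity
    have hmono : Monotone (fun y => xiHS ubar w t y) := by
      intro a b hab
      have h1 := hdiff a b hab
      have hnn : 0 ≤ ∫ y in a..b, gw y :=
        intervalIntegral.integral_nonneg hab (fun y _ => hgnonneg y)
      simp only at h1 ⊢
      linarith
    have hF0 : ∀ y : ℝ, xiHS ubar w t y = xiHS ubar w t 0 + ∫ x in (0 : ℝ)..y, gw x := by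
      intro y
      rcases le_total 0 y with h | h
      · have := hdiff 0 y h
        linarith
      · have h1 := hdiff y 0 h
        have h2 : ∫ x in (0 : ℝ)..y, gw x = -∫ x in y..(0 : ℝ), gw x :=
          intervalIntegral.integral_symm y 0
        linarith
    have hcont : Continuous (fun y => xiHS ubar w t y) := by
      have heq : (fun y => xiHS ubar w t y)
          = fun y => xiHS ubar w t 0 + ∫ x in (0 : ℝ)..y, gw x := funext hF0
      rw [heq]
      exact continuous_const.add (intervalIntegral.continuous_primitive hIg 0)
    set S : StieltjesFunction ℝ :=
      { toFun := fun y => xiHS ubar w t y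
        mono' := hmono
        right_continuous' := fun x => hcont.continuousAt.continuousWithinAt } with hS
    have hmeas : S.measure = volume.withDensity (fun y => ENNReal.ofReal (gw y)) := by
      refine Measure.ext_of_Ioc _ _ (fun p q hpq => ?_)
      rw [S.measure_Ioc, withDensity_apply _ measurableSet_Ioc,
        ← ofReal_integral_eq_lintegral_ofReal (hIg p q).1 (ae_of_all _ fun y => hgnonneg y)]
      congr 1
      rw [← intervalIntegral.integral_of_le hpq.le]
      exact hdiff p q hpq.le
    have hrn := Measure.rnDeriv_withDensity (volume : Measure ℝ) hgm.ennreal_ofReal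
    filter_upwards [S.ae_hasDerivAt, hrn, hwe] with y hder hrny hy
    rw [hmeas] at hder
    rw [hrny, ENNReal.toReal_ofReal (hgnonneg y)] at hder
    have hfeq : (fun z => xiHS ubar ubarx t z) = fun z => xiHS ubar w t z := funext hxi
    have hval : (if ubarx y > -2 / t then (1 / 4) * (2 + t * ubarx y) ^ 2 else 0) = gw y := by
      simp only [hgw, hy]
    rw [hfeq, hval]
    exact hder
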